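/- arXiv:2604.02840 — 5 statements merged into one kernel-verified Lean document; each statement's English description precedes it below -/
import Mathlib

section
/- Let A, V̂ ∈ ℂ^{n×n} with V̂ invertible, and D̂ = diag(d̂₁,…,d̂ₙ). Define R = A V̂ − V̂ D̂, Y = V̂⁻¹ R, and D̃ = D̂ + diag(Y) with entries d̃ᵢ = d̂ᵢ + yᵢᵢ. Assume d̃ᵢ ≠ d̃ⱼ for all i ≠ j. Define Ẽ by ẽᵢᵢ = 0 and ẽᵢⱼ = yᵢⱼ/(d̃ⱼ − d̃ᵢ) for i ≠ j, and set Ṽ = V̂(I + Ẽ). Then V̂⁻¹(A Ṽ − Ṽ D̃) = Y Ẽ − Y_d Ẽ, where Y_d = diag(y₁₁,…,yₙₙ). -/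
open Matrix

theorem right_only_exact_residual_identity {n : ℕ}
    (A V : Matrix (Fin n) (Fin n) ℂ) (hV : IsUnit V.det)
    (d : Fin n → ℂ)
    (R Y : Matrix (Fin n) (Fin n) ℂ)
    (hR : R = A * V - V * Matrix.diagonal d)
    (hY : Y = V⁻¹ * R)
    (dt : Fin n → ℂ) (hdt : ∀ i, dt i = d i + Y i i)
    (hsep : ∀ i j, i ≠ j → dt i ≠ dt j)
    (E : Matrix (Fin n) (Fin n) ℂ)
    (hE : ∀ i j, E i j = if i = j then 0 else Y i j / (dt j - dt i))
    (Vt : Matrix (Fin n) (Fin n) ℂ)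
    (hVt : Vt = V * (1 + E)) :
    V⁻¹ * (A * Vt - Vt * Matrix.diagonal dt)
      = Y * E - Matrix.diagonal (fun i => Y i i) * E := by
  have hinv : V⁻¹ * V = 1 := nonsing_inv_mul V hV
  have hAV : V⁻¹ * A * V = Matrix.diagonal d + Y := by
    rw [hY, hR, Matrix.mul_sub, ← mul_assoc, ← mul_assoc, hinv, one_mul]
    abel
  have key : V⁻¹ * (A * Vt - Vt * Matrix.diagonal dt)
      = (Matrix.diagonal d + Y) * (1 + E) - (1 + E) * Matrix.diagonal dt := by
    rw [hVt, Matrix.mul_sub, ← mul_assoc, ← mul_assoc, hAV, mul_assoc V (1 + E),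
      ← mul_assoc V⁻¹ V, hinv, one_mul]
  have aux : Matrix.diagonal d + Matrix.diagonal d * E + Y - Matrix.diagonal dt
      - E * Matrix.diagonal dt = -(Matrix.diagonal (fun i => Y i i) * E) := by
    ext i j
    simp only [Matrix.add_apply, Matrix.sub_apply, Matrix.neg_apply, Matrix.diagonal_mul,
      Matrix.mul_diagonal, Matrix.diagonal_apply]
    by_cases hij : i = j
    · subst hij
      simp [hE, hdt]
    · have hne : dt j - dt i ≠ 0 := sub_ne_zero.mpr (fun h => hsep j i (Ne.symm hij) h)
      rw [if_neg hij, if_neg hij, hE i j, if_neg hij, hdt i]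
      have hdi : d i = dt i - Y i i := by rw [hdt]; ring
      rw [hdi]
      field_simp
      have hne' : -dt i + dt j ≠ 0 := by rwa [neg_add_eq_sub]
      linear_combination (-(Y i j)) * mul_inv_cancel₀ hne'
  have expand : (Matrix.diagonal d + Y) * (1 + E) - (1 + E) * Matrix.diagonal dt
      = (Matrix.diagonal d + Matrix.diagonal d * E + Y - Matrix.diagonal dt
        - E * Matrix.diagonal dt) + Y * E := by noncomm_ring
  rw [key, expand, aux]
  noncomm_ring
end

section
/- Under the setup of the right-only refinement (R = A V̂ − V̂ D̂, Y = V̂⁻¹ R, D̃ = D̂ + diag(Y) with pairwise distinct diagonal entries, Ẽ defined by ẽᵢᵢ = 0, ẽᵢⱼ = yᵢⱼ/(d̃ⱼ − d̃ᵢ), Ṽ = V̂(I + Ẽ)), the Frobenius norm of the updated scaled residual satisfies ‖V̂⁻¹(A Ṽ − Ṽ D̃)‖_F ≤ 2‖Y‖_F² / sep(D̃), where sep(D̃) = min_{i≠j} |d̃ᵢ − d̃ⱼ| > 0. -/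
open Matrix

noncomputable def frob {n : ℕ} (M : Matrix (Fin n) (Fin n) ℂ) : ℝ :=
  Real.sqrt (∑ i, ∑ j, ‖M i j‖ ^ 2)

section aux

attribute [local instance] Matrix.frobeniusSeminormedAddCommGroup Matrix.frobeniusNormedRing

lemma frob_eq_norm {n : ℕ} (M : Matrix (Fin n) (Fin n) ℂ) : frob M = ‖M‖ := by
  rw [Matrix.frobenius_norm_def, frob, Real.sqrt_eq_rpow]
  norm_num

lemma frob_mul_le {n : ℕ} (A B : Matrix (Fin n) (Fin n) ℂ) :
    frob (A * B) ≤ frob A * frob B := by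
  simp only [frob_eq_norm]
  exact norm_mul_le A B

end aux

lemma frob_nonneg {n : ℕ} (M : Matrix (Fin n) (Fin n) ℂ) : 0 ≤ frob M :=
  Real.sqrt_nonneg _

lemma frob_mono {n : ℕ} {A B : Matrix (Fin n) (Fin n) ℂ}
    (h : ∀ i j, ‖A i j‖ ≤ ‖B i j‖) : frob A ≤ frob B := by
  apply Real.sqrt_le_sqrt
  refine Finset.sum_le_sum fun i _ => Finset.sum_le_sum fun j _ => ?_
  exact pow_le_pow_left₀ (norm_nonneg _) (h i j) 2

lemma frob_le_div {n : ℕ} {A B : Matrix (Fin n) (Fin n) ℂ} {s : ℝ} (hs : 0 < s)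
    (h : ∀ i j, ‖A i j‖ ≤ ‖B i j‖ / s) : frob A ≤ frob B / s := by
  have h2 : ∑ i, ∑ j, ‖A i j‖ ^ 2 ≤ (∑ i, ∑ j, ‖B i j‖ ^ 2) / s ^ 2 := by
    rw [Finset.sum_div]
    refine Finset.sum_le_sum fun i _ => ?_
    rw [Finset.sum_div]
    refine Finset.sum_le_sum fun j _ => ?_
    calc ‖A i j‖ ^ 2 ≤ (‖B i j‖ / s) ^ 2 := pow_le_pow_left₀ (norm_nonneg _) (h i j) 2
      _ = ‖B i j‖ ^ 2 / s ^ 2 := div_pow _ _ _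
  calc frob A ≤ Real.sqrt ((∑ i, ∑ j, ‖B i j‖ ^ 2) / s ^ 2) := Real.sqrt_le_sqrt h2
    _ = frob B / s := by
        rw [Real.sqrt_div (by positivity), Real.sqrt_sq hs.le]; rfl

theorem right_only_quadratic_residual_bound {n : ℕ}
    (A V : Matrix (Fin n) (Fin n) ℂ) (hV : IsUnit V.det)
    (d : Fin n → ℂ)
    (R Y : Matrix (Fin n) (Fin n) ℂ)
    (hR : R = A * V - V * Matrix.diagonal d)
    (hY : Y = V⁻¹ * R)
    (dt : Fin n → ℂ) (hdt : ∀ i, dt i = d i + Y i i)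
    (sep : ℝ) (hseppos : 0 < sep)
    (hsep : ∀ i j, i ≠ j → sep ≤ ‖dt i - dt j‖)
    (E : Matrix (Fin n) (Fin n) ℂ)
    (hE : ∀ i j, E i j = if i = j then 0 else Y i j / (dt j - dt i))
    (Vt : Matrix (Fin n) (Fin n) ℂ)
    (hVt : Vt = V * (1 + E)) :
    frob (V⁻¹ * (A * Vt - Vt * Matrix.diagonal dt)) ≤ 2 * frob Y ^ 2 / sep := by
  have hVinv : V⁻¹ * V = 1 := Matrix.nonsing_inv_mul V hV
  set Yd : Matrix (Fin n) (Fin n) ℂ := Matrix.diagonal (fun i => Y i i) with hYd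
  have hdtne : ∀ i j : Fin n, i ≠ j → dt j - dt i ≠ 0 := by
    intro i j hij h0
    have := hsep j i (Ne.symm hij)
    rw [h0] at this
    simp at this
    linarith
  have key : V⁻¹ * (A * Vt - Vt * Matrix.diagonal dt) = (Y - Yd) * E := by
    have hVA : V⁻¹ * (A * V) = Y + Matrix.diagonal d := by
      rw [hY, hR, Matrix.mul_sub, ← Matrix.mul_assoc V⁻¹ V, hVinv, Matrix.one_mul]
      abel
    have expand : V⁻¹ * (A * Vt - Vt * Matrix.diagonal dt)
        = (V⁻¹ * (A * V)) * (1 + E) - (V⁻¹ * V) * ((1 + E) * Matrix.diagonal dt) := by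
      rw [hVt]; noncomm_ring
    rw [expand, hVA, hVinv, Matrix.one_mul]
    ext i j
    simp only [Matrix.add_mul, Matrix.mul_one, Matrix.mul_add, Matrix.sub_mul, Matrix.sub_apply,
      Matrix.add_apply, Matrix.mul_diagonal, Matrix.diagonal_mul, Matrix.diagonal_apply,
      Matrix.one_apply, hYd]
    by_cases hij : i = j
    · subst hij
      rw [hE]
      simp only [if_pos rfl, hdt i, ite_true, if_true]
      ring_nf
    · have h0 := hdtne i j hij
      rw [hE]
      have hdi : d i = dt i - Y i i := by rw [hdt i]; ring
      simp only [if_neg hij, hdi]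
      field_simp
      ring
  rw [key]
  have h1 : frob ((Y - Yd) * E) ≤ frob (Y - Yd) * frob E := frob_mul_le _ _
  have h2 : frob (Y - Yd) ≤ frob Y := by
    apply frob_mono
    intro i j
    by_cases hij : i = j
    · subst hij; simp [hYd, Matrix.sub_apply]
    · simp [hYd, Matrix.sub_apply, Matrix.diagonal_apply_ne' _ (Ne.symm hij), hij]
  have h3 : frob E ≤ frob Y / sep := by
    apply frob_le_div hseppos
    intro i j
    rw [hE]
    by_cases hij : i = j
    · simp only [if_pos hij, norm_zero]
      positivity
    · simp only [if_neg hij, norm_div]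
      exact div_le_div_of_nonneg_left (norm_nonneg _) hseppos (hsep j i (Ne.symm hij))
  calc frob ((Y - Yd) * E) ≤ frob (Y - Yd) * frob E := h1
    _ ≤ frob Y * (frob Y / sep) :=
        mul_le_mul h2 h3 (frob_nonneg _) (frob_nonneg _)
    _ = frob Y ^ 2 / sep := by ring
    _ ≤ 2 * frob Y ^ 2 / sep := by
        gcongr
        nlinarith [sq_nonneg (frob Y)]
end

section
/- Let V̂ ∈ ℂ^{n×n} be invertible and Ŵ ∈ ℂ^{n×n} arbitrary. Define Δ = Ŵᴴ V̂ − I. For any Ẽ ∈ ℂ^{n×n}, define F by Fᴴ = −Δ − Ẽ, and set Ṽ = V̂(I + Ẽ), W̃ = Ŵ(I + F). Then the updated biorthogonality error Δ̃ = W̃ᴴ Ṽ − I satisfies the exact identity Δ̃ = −Ẽ² − Ẽ Δ − Δ² − Δ² Ẽ − Ẽ Δ Ẽ. -/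
open Matrix

theorem biorthogonality_error_exact_update {n : ℕ}
    (V W : Matrix (Fin n) (Fin n) ℂ) (hV : IsUnit V.det)
    (Δ E F Vt Wt Δt : Matrix (Fin n) (Fin n) ℂ)
    (hΔ : Δ = Wᴴ * V - 1)
    (hF : Fᴴ = -Δ - E)
    (hVt : Vt = V * (1 + E))
    (hWt : Wt = W * (1 + F))
    (hΔt : Δt = Wtᴴ * Vt - 1) :
    Δt = -(E * E) - E * Δ - Δ * Δ - Δ * Δ * E - E * Δ * E := by
  have hWV : Wᴴ * V = Δ + 1 := by rw [hΔ, sub_add_cancel]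
  subst hΔt hVt hWt
  rw [conjTranspose_mul, mul_assoc, ← mul_assoc Wᴴ, conjTranspose_add,
    conjTranspose_one, hF, hWV]
  noncomm_ring
end

section
/- In the setting of the previous identity (Δ = Ŵᴴ V̂ − I, Fᴴ = −Δ − Ẽ, Ṽ = V̂(I+Ẽ), W̃ = Ŵ(I+F)), for any submultiplicative matrix norm ‖·‖, the updated biorthogonality error satisfies ‖W̃ᴴ Ṽ − I‖ ≤ (‖Ẽ‖ + ‖Δ‖)² + (‖Ẽ‖ + ‖Δ‖)³. -/
open Matrix

theorem biorthogonality_error_norm_bound {n : ℕ}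
    (ν : Matrix (Fin n) (Fin n) ℂ → ℝ)
    (hνnonneg : ∀ M, 0 ≤ ν M)
    (hνadd : ∀ M N, ν (M + N) ≤ ν M + ν N)
    (hνneg : ∀ M, ν (-M) = ν M)
    (hνmul : ∀ M N, ν (M * N) ≤ ν M * ν N)
    (V W : Matrix (Fin n) (Fin n) ℂ)
    (Δ E F Vt Wt : Matrix (Fin n) (Fin n) ℂ)
    (hΔ : Δ = Wᴴ * V - 1)
    (hF : Fᴴ = -Δ - E)
    (hVt : Vt = V * (1 + E))
    (hWt : Wt = W * (1 + F)) :
    ν (Wtᴴ * Vt - 1) ≤ (ν E + ν Δ) ^ 2 + (ν E + ν Δ) ^ 3 := by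
  have hWV : Wᴴ * V = 1 + Δ := by rw [hΔ]; abel
  have h1 : Wtᴴ = (1 - Δ - E) * Wᴴ := by
    rw [hWt, conjTranspose_mul, conjTranspose_add, conjTranspose_one, hF]
    noncomm_ring
  have key : Wtᴴ * Vt - 1 = -(E * E + E * Δ + Δ * Δ + Δ * Δ * E + E * Δ * E) := by
    have : Wtᴴ * Vt = ((1 - Δ - E) * (Wᴴ * V)) * (1 + E) := by
      rw [h1, hVt]; noncomm_ring
    rw [this, hWV]; noncomm_ring
  rw [key, hνneg]
  have hEE := hνmul E E
  have hED := hνmul E Δ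
  have hDD := hνmul Δ Δ
  have hDDE : ν (Δ * Δ * E) ≤ ν Δ * ν Δ * ν E :=
    le_trans (hνmul _ _) (mul_le_mul_of_nonneg_right hDD (hνnonneg E))
  have hEDE : ν (E * Δ * E) ≤ ν E * ν Δ * ν E :=
    le_trans (hνmul _ _) (mul_le_mul_of_nonneg_right hED (hνnonneg E))
  have hsum : ν (E * E + E * Δ + Δ * Δ + Δ * Δ * E + E * Δ * E) ≤
      ν (E * E) + ν (E * Δ) + ν (Δ * Δ) + ν (Δ * Δ * E) + ν (E * Δ * E) := by
    calc ν (E * E + E * Δ + Δ * Δ + Δ * Δ * E + E * Δ * E)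
        ≤ ν (E * E + E * Δ + Δ * Δ + Δ * Δ * E) + ν (E * Δ * E) := hνadd _ _
      _ ≤ ν (E * E + E * Δ + Δ * Δ) + ν (Δ * Δ * E) + ν (E * Δ * E) := by
          linarith [hνadd (E * E + E * Δ + Δ * Δ) (Δ * Δ * E)]
      _ ≤ ν (E * E + E * Δ) + ν (Δ * Δ) + ν (Δ * Δ * E) + ν (E * Δ * E) := by
          linarith [hνadd (E * E + E * Δ) (Δ * Δ)]
      _ ≤ _ := by linarith [hνadd (E * E) (E * Δ)]
  nlinarith [hνnonneg E, hνnonneg Δ, hsum, hEE, hED, hDD, hDDE, hEDE]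
end

section
/- Let A V̂ = V̂(D̂ + Y⋆) with V̂ invertible, D̂ diagonal, and let D̃ = D̂ + diag(Y_W) for some matrix Y_W, where the entries d̃ᵢ of D̃ are pairwise distinct. Define Ẽ_W by ẽᵢᵢ = 0 and ẽᵢⱼ = (Y_W)ᵢⱼ/(d̃ⱼ − d̃ᵢ) for i ≠ j, and Ṽ = V̂(I + Ẽ_W). Then V̂⁻¹(A Ṽ − Ṽ D̃) = (Y⋆ − Y_W) + (Y⋆ − diag(Y_W)) Ẽ_W, exactly. -/
open Matrix

theorem W_method_exact_residual_identity {n : ℕ}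
    (A V : Matrix (Fin n) (Fin n) ℂ) (hV : IsUnit V.det)
    (d : Fin n → ℂ)
    (Ystar YW : Matrix (Fin n) (Fin n) ℂ)
    (hAV : A * V = V * (Matrix.diagonal d + Ystar))
    (dt : Fin n → ℂ) (hdt : ∀ i, dt i = d i + YW i i)
    (hsep : ∀ i j, i ≠ j → dt i ≠ dt j)
    (EW : Matrix (Fin n) (Fin n) ℂ)
    (hEW : ∀ i j, EW i j = if i = j then 0 else YW i j / (dt j - dt i))
    (Vt : Matrix (Fin n) (Fin n) ℂ)
    (hVt : Vt = V * (1 + EW)) :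
    V⁻¹ * (A * Vt - Vt * Matrix.diagonal dt)
      = (Ystar - YW) + (Ystar - Matrix.diagonal (fun i => YW i i)) * EW := by
  have hVi : V⁻¹ * V = 1 := nonsing_inv_mul V hV
  have hDt : Matrix.diagonal dt
      = Matrix.diagonal d + Matrix.diagonal (fun i => YW i i) := by
    ext i j
    by_cases h : i = j
    · subst h; simp [hdt]
    · simp [Matrix.diagonal_apply_ne _ h, h]
  have hkey : Matrix.diagonal d * EW - EW * Matrix.diagonal dt
      = -(YW - Matrix.diagonal (fun i => YW i i))
        - Matrix.diagonal (fun i => YW i i) * EW := by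
    ext i j
    by_cases h : i = j
    · subst h
      simp [Matrix.diagonal_mul, Matrix.mul_diagonal, hEW]
    · have hne : dt j - dt i ≠ 0 := sub_ne_zero.mpr (hsep j i (Ne.symm h))
      simp only [Matrix.sub_apply, Matrix.neg_apply, Matrix.diagonal_mul,
        Matrix.mul_diagonal, Matrix.diagonal_apply_ne _ h, hEW i j, if_neg h]
      have hd : d i = dt i - YW i i := by rw [hdt]; ring
      rw [hd]
      field_simp
      ring
  subst hVt
  have h1 : A * (V * (1 + EW)) = V * ((Matrix.diagonal d + Ystar) * (1 + EW)) := by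
    rw [← mul_assoc, hAV, mul_assoc]
  rw [h1, mul_assoc V (1 + EW), ← mul_sub, ← mul_assoc, hVi, one_mul]
  have expand : (Matrix.diagonal d + Ystar) * (1 + EW) - (1 + EW) * Matrix.diagonal dt
      = (Matrix.diagonal d * EW - EW * Matrix.diagonal dt)
        + (Matrix.diagonal d - Matrix.diagonal dt) + Ystar + Ystar * EW := by
    noncomm_ring
  rw [expand, hkey, hDt]
  noncomm_ring
end
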